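/- Let p be an odd prime. Then Σ_{j=0}^{p-2} (-1)^j · G_{p-1}^(j+1) · p^j = 0, where the equality holds in the rational numbers. -/

import Mathlib

/-- `G_n^(k)`: the `k`-th elementary symmetric function of `1, 1/2, ..., 1/n`. -/
def genG (n k : ℕ) : ℚ :=
  ∑ s ∈ Finset.powersetCard k (Finset.range n), ∏ i ∈ s, (1 : ℚ) / (i + 1)

lemma genG_gen (n : ℕ) (x : ℚ) :
    ∑ k ∈ Finset.range (n + 1), genG n k * x ^ k
      = ∏ i ∈ Finset.range n, (x / (i + 1) + 1) := by
  rw [Finset.prod_add]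
  rw [Finset.sum_powerset]
  simp only [Finset.card_range]
  refine Finset.sum_congr rfl fun k hk => ?_
  rw [genG, Finset.sum_mul]
  refine Finset.sum_congr rfl fun t ht => ?_
  rw [Finset.mem_powersetCard] at ht
  simp only [Finset.prod_const_one, mul_one]
  rw [← ht.2, ← Finset.prod_const, ← Finset.prod_mul_distrib]
  exact Finset.prod_congr rfl fun i _ => by ring

lemma genG_zero (n : ℕ) : genG n 0 = 1 := by
  simp [genG]

lemma prod_eq_one (n : ℕ) (hn : Even n) :
    ∏ i ∈ Finset.range n, (-(n + 1 : ℚ) / (i + 1) + 1) = 1 := by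
  have key : ∀ i ∈ Finset.range n,
      (-(n + 1 : ℚ) / (i + 1) + 1) = (-1) * (((n - i : ℕ) : ℚ) / ((i + 1 : ℕ) : ℚ)) := by
    intro i hi
    rw [Finset.mem_range] at hi
    have h1 : ((n - i : ℕ) : ℚ) = (n : ℚ) - i := by
      rw [Nat.cast_sub hi.le]
    have h2 : ((i : ℚ) + 1) ≠ 0 := by positivity
    rw [h1]
    field_simp
    push_cast
    ring
  rw [Finset.prod_congr rfl key, Finset.prod_mul_distrib, Finset.prod_const,
    Finset.card_range, hn.neg_one_pow, one_mul, Finset.prod_div_distrib]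
  have : ∏ i ∈ Finset.range n, ((n - i : ℕ) : ℚ) = ∏ i ∈ Finset.range n, ((i + 1 : ℕ) : ℚ) := by
    rw [← Finset.prod_range_reflect (fun j => ((j + 1 : ℕ) : ℚ)) n]
    refine Finset.prod_congr rfl fun i hi => ?_
    rw [Finset.mem_range] at hi
    congr 1
    omega
  rw [this, div_self]
  refine Finset.prod_ne_zero_iff.2 fun i _ => ?_
  positivity

theorem genG_alternating_sum_eq_zero (p : ℕ) (hp : p.Prime) (hodd : Odd p) :
    ∑ j ∈ Finset.range (p - 1), (-1 : ℚ) ^ j * genG (p - 1) (j + 1) * (p : ℚ) ^ j = 0 := by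
  obtain ⟨n, rfl⟩ : ∃ n, p = n + 1 := ⟨p - 1, (Nat.succ_pred_eq_of_pos hp.pos).symm⟩
  have hn : Even n := by
    rcases hodd with ⟨m, hm⟩
    exact ⟨m, by omega⟩
  have key := genG_gen n (-(n + 1 : ℚ))
  rw [prod_eq_one n hn, Finset.sum_range_succ', genG_zero, one_mul, pow_zero] at key
  have key2 : ∑ j ∈ Finset.range n, genG n (j + 1) * (-(n + 1 : ℚ)) ^ (j + 1) = 0 := by
    linarith
  have hne : ((n : ℚ) + 1) ≠ 0 := by positivity
  have expand : ∀ j, genG n (j + 1) * (-(n + 1 : ℚ)) ^ (j + 1)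
      = (-(n + 1 : ℚ)) * ((-1 : ℚ) ^ j * genG n (j + 1) * ((n : ℚ) + 1) ^ j) := by
    intro j
    rw [pow_succ, neg_pow]
    ring
  rw [Finset.sum_congr rfl fun j _ => expand j, ← Finset.mul_sum,
    mul_eq_zero] at key2
  have hsum := key2.resolve_left (neg_ne_zero.2 hne)
  simpa using hsum
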